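/- arXiv:2204.10313 — 4 statements merged into one kernel-verified Lean document; each statement's English description precedes it below -/
import Mathlib

section
/- Fix n, m ∈ {1,…,N}. Regard S_m(x) as a function of the n-th site point x_n (all other sites, all matrices D_k, the evaluation point x, and ε_s ≥ 0 being fixed). If x ≠ x_n, then this function is differentiable at x_n and its gradient equals S_m(x)·(S_n(x) − δ_{mn})·Y_n(x), where Y_n(x) = A_n(x_n − x)/d_n(x, x_n) and δ_{mn} is the Kronecker delta. -/
open Matrix

noncomputable def dotCLM {d : ℕ} (c : Fin d → ℝ) : (Fin d → ℝ) →L[ℝ] ℝ :=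
  LinearMap.toContinuousLinearMap
    { toFun := fun w => c ⬝ᵥ w
      map_add' := fun a b => dotProduct_add c a b
      map_smul' := fun r a => by simp [dotProduct_smul] }

@[simp] lemma dotCLM_apply {d : ℕ} (c w : Fin d → ℝ) : dotCLM c w = c ⬝ᵥ w := rfl

lemma hasFDerivAt_quadForm {d : ℕ} (A : Matrix (Fin d) (Fin d) ℝ) (x q0 : Fin d → ℝ) :
    HasFDerivAt (fun q : Fin d → ℝ => (x - q) ⬝ᵥ A.mulVec (x - q))
      (dotCLM (-(A.mulVec (x - q0)) - Aᵀ.mulVec (x - q0))) q0 := by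
  have hrw : ∀ q : Fin d → ℝ, (x - q) ⬝ᵥ A.mulVec (x - q)
      = ∑ i, ∑ j, A i j * ((x i - q i) * (x j - q j)) := by
    intro q
    simp only [dotProduct, Matrix.mulVec, Pi.sub_apply, Finset.mul_sum]
    exact Finset.sum_congr rfl fun i _ => Finset.sum_congr rfl fun j _ => by ring
  have hcoord : ∀ i : Fin d, HasFDerivAt (fun q : Fin d → ℝ => x i - q i)
      (-(ContinuousLinearMap.proj i : (Fin d → ℝ) →L[ℝ] ℝ)) q0 := by
    intro i
    simpa using (hasFDerivAt_const (x i) q0).fun_sub (hasFDerivAt_apply (𝕜 := ℝ) i q0)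
  have hsum : HasFDerivAt (fun q : Fin d → ℝ => ∑ i, ∑ j, A i j * ((x i - q i) * (x j - q j)))
      (∑ i : Fin d, ∑ j : Fin d, A i j •
        ((x i - q0 i) • (-(ContinuousLinearMap.proj j : (Fin d → ℝ) →L[ℝ] ℝ)) +
         (x j - q0 j) • (-(ContinuousLinearMap.proj i : (Fin d → ℝ) →L[ℝ] ℝ)))) q0 :=
    HasFDerivAt.fun_sum fun i _ => HasFDerivAt.fun_sum fun j _ =>
      ((hcoord i).fun_mul (hcoord j)).const_mul (A i j)
  have hLeq : (∑ i : Fin d, ∑ j : Fin d, A i j •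
        ((x i - q0 i) • (-(ContinuousLinearMap.proj j : (Fin d → ℝ) →L[ℝ] ℝ)) +
         (x j - q0 j) • (-(ContinuousLinearMap.proj i : (Fin d → ℝ) →L[ℝ] ℝ))))
      = dotCLM (-(A.mulVec (x - q0)) - Aᵀ.mulVec (x - q0)) := by
    ext w
    simp only [ContinuousLinearMap.coe_sum', Finset.sum_apply, ContinuousLinearMap.smul_apply,
      ContinuousLinearMap.add_apply, ContinuousLinearMap.neg_apply,
      ContinuousLinearMap.proj_apply, dotCLM_apply, smul_eq_mul, dotProduct, Matrix.mulVec,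
      Pi.sub_apply, Pi.neg_apply, Matrix.transpose_apply]
    rw [show (∑ i, ∑ j, A i j * ((x i - q0 i) * -w j + (x j - q0 j) * -w i))
        = (∑ i, ∑ j, -(A i j * ((x i - q0 i) * w j)))
          + ∑ i, ∑ j, -(A i j * ((x j - q0 j) * w i)) from by
      rw [← Finset.sum_add_distrib]
      refine Finset.sum_congr rfl fun i _ => ?_
      rw [← Finset.sum_add_distrib]
      exact Finset.sum_congr rfl fun j _ => by ring]
    rw [Finset.sum_comm (f := fun i j => -(A i j * ((x i - q0 i) * w j)))]
    rw [show (∑ k, (-(∑ j, A k j * (x j - q0 j)) - ∑ j, A j k * (x j - q0 j)) * w k)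
        = (∑ k, ∑ j, -(A j k * ((x j - q0 j) * w k)))
          + ∑ k, ∑ j, -(A k j * ((x j - q0 j) * w k)) from by
      rw [← Finset.sum_add_distrib]
      refine Finset.sum_congr rfl fun k _ => ?_
      rw [sub_mul, neg_mul, Finset.sum_mul, Finset.sum_mul, ← Finset.sum_neg_distrib,
        sub_eq_add_neg, ← Finset.sum_neg_distrib, add_comm]
      exact congrArg₂ (· + ·) (Finset.sum_congr rfl fun j _ => by ring)
        (Finset.sum_congr rfl fun j _ => by ring)]
  rw [funext hrw, ← hLeq]  -- ?
  exact hsum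

lemma hasFDerivAt_exp_neg_mdist' {d : ℕ} (A : Matrix (Fin d) (Fin d) ℝ) (x q0 : Fin d → ℝ)
    (h : (x - q0) ⬝ᵥ A.mulVec (x - q0) ≠ 0) :
    HasFDerivAt (fun q => Real.exp (-(Real.sqrt ((x - q) ⬝ᵥ A.mulVec (x - q)))))
      (Real.exp (-(Real.sqrt ((x - q0) ⬝ᵥ A.mulVec (x - q0)))) •
        -((1 / (2 * Real.sqrt ((x - q0) ⬝ᵥ A.mulVec (x - q0)))) •
          dotCLM (-(A.mulVec (x - q0)) - Aᵀ.mulVec (x - q0)))) q0 :=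
  ((hasFDerivAt_quadForm A x q0).sqrt h).neg.exp
/-- The anisotropic (Mahalanobis-type) length `sqrt(uᵀ A u)`. -/
noncomputable def mdist {d : ℕ} (A : Matrix (Fin d) (Fin d) ℝ) (u : Fin d → ℝ) : ℝ :=
  Real.sqrt (u ⬝ᵥ A.mulVec u)

/-- The denominator `ε_s + ∑_{k=1}^N exp(−d_k(x, x_k))` with `A_k = D_k D_kᵀ`. -/
noncomputable def Sden {d N : ℕ} (p : Fin N → Fin d → ℝ)
    (D : Fin N → Matrix (Fin d) (Fin d) ℝ) (ε : ℝ) (x : Fin d → ℝ) : ℝ :=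
  ε + ∑ k, Real.exp (-(mdist (D k * (D k)ᵀ) (x - p k)))

/-- `S_m(x) = exp(−d_m(x, x_m)) / (ε_s + ∑_k exp(−d_k(x, x_k)))` for `m = 1,…,N`. -/
noncomputable def S {d N : ℕ} (p : Fin N → Fin d → ℝ)
    (D : Fin N → Matrix (Fin d) (Fin d) ℝ) (ε : ℝ) (x : Fin d → ℝ) (m : Fin N) : ℝ :=
  Real.exp (-(mdist (D m * (D m)ᵀ) (x - p m))) / Sden p D ε x

/-- `S_0(x) = ε_s / (ε_s + ∑_k exp(−d_k(x, x_k)))`. -/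
noncomputable def S0 {d N : ℕ} (p : Fin N → Fin d → ℝ)
    (D : Fin N → Matrix (Fin d) (Fin d) ℝ) (ε : ℝ) (x : Fin d → ℝ) : ℝ :=
  ε / Sden p D ε x

set_option maxHeartbeats 2000000 in
/-- Regarding `S_m(x)` as a function of the `n`-th site point `x_n` (all other data fixed),
if `x ≠ x_n` then it is differentiable at `x_n` with gradient
`S_m(x)·(S_n(x) − δ_{mn})·Y_n(x)` where `Y_n(x) = A_n(x_n − x)/d_n(x, x_n)`
(the gradient being expressed through the Fréchet derivative `w ↦ ⟨grad, w⟩`). -/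
theorem S_differentiableAt_site {d N : ℕ} (p : Fin N → Fin d → ℝ)
    (D : Fin N → Matrix (Fin d) (Fin d) ℝ) (hD : ∀ k, IsUnit (D k))
    (ε : ℝ) (hε : 0 ≤ ε) (x : Fin d → ℝ) (m n : Fin N) (hx : x ≠ p n) :
    DifferentiableAt ℝ (fun q => S (Function.update p n q) D ε x m) (p n) ∧
      ∀ w : Fin d → ℝ,
        fderiv ℝ (fun q => S (Function.update p n q) D ε x m) (p n) w =
          S p D ε x m * (S p D ε x n - if m = n then 1 else 0) *
            (((mdist (D n * (D n)ᵀ) (x - p n))⁻¹ •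
              (D n * (D n)ᵀ).mulVec (p n - x)) ⬝ᵥ w) := by
  classical
  have hAt : (D n * (D n)ᵀ)ᵀ = D n * (D n)ᵀ := by
    rw [Matrix.transpose_mul, Matrix.transpose_transpose]
  have hu0 : x - p n ≠ 0 := sub_ne_zero.mpr hx
  have hvne : (D n)ᵀ.mulVec (x - p n) ≠ 0 := by
    intro h
    have hinj : Function.Injective ((D n)ᵀ.mulVec) :=
      Matrix.mulVec_injective_iff_isUnit.mpr ((Matrix.isUnit_transpose (D n)).mpr (hD n))
    exact hu0 (hinj (by simpa using h))
  have hg0 : 0 < (x - p n) ⬝ᵥ (D n * (D n)ᵀ).mulVec (x - p n) := by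
    have heq : (x - p n) ⬝ᵥ (D n * (D n)ᵀ).mulVec (x - p n)
        = ((D n)ᵀ.mulVec (x - p n)) ⬝ᵥ ((D n)ᵀ.mulVec (x - p n)) := by
      rw [← Matrix.mulVec_mulVec, Matrix.dotProduct_mulVec, ← Matrix.mulVec_transpose]
    rw [heq]
    have h1 : (0:ℝ) ≤ ((D n)ᵀ.mulVec (x - p n)) ⬝ᵥ ((D n)ᵀ.mulVec (x - p n)) := by
      simp only [dotProduct]
      exact Finset.sum_nonneg fun i _ => mul_self_nonneg _
    exact lt_of_le_of_ne h1 (Ne.symm fun h => hvne (dotProduct_self_eq_zero.mp h))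
  have hc0 : 0 < Real.sqrt ((x - p n) ⬝ᵥ (D n * (D n)ᵀ).mulVec (x - p n)) :=
    Real.sqrt_pos.mpr hg0
  simp only [S, Sden, mdist]
  set K : ℝ := ε + ∑ k ∈ Finset.univ \ {n},
      Real.exp (-(Real.sqrt ((x - p k) ⬝ᵥ (D k * (D k)ᵀ).mulVec (x - p k)))) with hKdef
  have hden : ∀ q : Fin d → ℝ,
      (ε + ∑ k, Real.exp (-(Real.sqrt ((x - Function.update p n q k) ⬝ᵥ
          (D k * (D k)ᵀ).mulVec (x - Function.update p n q k)))))
      = Real.exp (-(Real.sqrt ((x - q) ⬝ᵥ (D n * (D n)ᵀ).mulVec (x - q)))) + K := by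
    intro q
    have h1 : ∀ k : Fin N, Real.exp (-(Real.sqrt ((x - Function.update p n q k) ⬝ᵥ
          (D k * (D k)ᵀ).mulVec (x - Function.update p n q k))))
        = Function.update (fun k : Fin N => Real.exp (-(Real.sqrt ((x - p k) ⬝ᵥ
            (D k * (D k)ᵀ).mulVec (x - p k))))) n
            (Real.exp (-(Real.sqrt ((x - q) ⬝ᵥ (D n * (D n)ᵀ).mulVec (x - q))))) k := by
      intro k
      rcases eq_or_ne k n with rfl | hk
      · simp
      · simp [Function.update_of_ne hk]
    rw [Finset.sum_congr rfl fun k _ => h1 k,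
      Finset.sum_update_of_mem (Finset.mem_univ n), hKdef]
    ring
  have hden0 : (ε + ∑ k, Real.exp (-(Real.sqrt ((x - p k) ⬝ᵥ
        (D k * (D k)ᵀ).mulVec (x - p k)))))
      = Real.exp (-(Real.sqrt ((x - p n) ⬝ᵥ (D n * (D n)ᵀ).mulVec (x - p n)))) + K := by
    have := hden (p n)
    rwa [Function.update_eq_self] at this
  have hK : 0 ≤ K := add_nonneg hε (Finset.sum_nonneg fun _ _ => (Real.exp_pos _).le)
  have hDen : 0 < Real.exp (-(Real.sqrt ((x - p n) ⬝ᵥ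
      (D n * (D n)ᵀ).mulVec (x - p n)))) + K :=
    add_pos_of_pos_of_nonneg (Real.exp_pos _) hK
  have hE := hasFDerivAt_exp_neg_mdist' (D n * (D n)ᵀ) x (p n) (ne_of_gt hg0)
  have hDq := hE.add_const K
  have hinv := (hasDerivAt_inv (ne_of_gt hDen)).comp_hasFDerivAt (p n) hDq
  rcases eq_or_ne m n with rfl | hmn
  · -- m = n (the variable n has been substituted by m)
    have hfun : (fun q => Real.exp (-(Real.sqrt ((x - Function.update p m q m) ⬝ᵥ
          (D m * (D m)ᵀ).mulVec (x - Function.update p m q m)))) /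
        (ε + ∑ k, Real.exp (-(Real.sqrt ((x - Function.update p m q k) ⬝ᵥ
          (D k * (D k)ᵀ).mulVec (x - Function.update p m q k))))))
        = fun q => Real.exp (-(Real.sqrt ((x - q) ⬝ᵥ (D m * (D m)ᵀ).mulVec (x - q)))) *
          (Real.exp (-(Real.sqrt ((x - q) ⬝ᵥ (D m * (D m)ᵀ).mulVec (x - q)))) + K)⁻¹ := by
      funext q
      rw [hden q, Function.update_self, div_eq_mul_inv]
    rw [hfun, hden0, if_pos rfl]
    have h' : HasFDerivAt
        (fun q => Real.exp (-(Real.sqrt ((x - q) ⬝ᵥ (D m * (D m)ᵀ).mulVec (x - q)))) *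
          (Real.exp (-(Real.sqrt ((x - q) ⬝ᵥ (D m * (D m)ᵀ).mulVec (x - q)))) + K)⁻¹)
        (Real.exp (-(Real.sqrt ((x - p m) ⬝ᵥ (D m * (D m)ᵀ).mulVec (x - p m)))) •
          (-((Real.exp (-(Real.sqrt ((x - p m) ⬝ᵥ (D m * (D m)ᵀ).mulVec (x - p m)))) + K) ^ 2)⁻¹ •
            (Real.exp (-(Real.sqrt ((x - p m) ⬝ᵥ (D m * (D m)ᵀ).mulVec (x - p m)))) •
              -((1 / (2 * Real.sqrt ((x - p m) ⬝ᵥ (D m * (D m)ᵀ).mulVec (x - p m)))) •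
                dotCLM (-((D m * (D m)ᵀ).mulVec (x - p m)) - (D m * (D m)ᵀ)ᵀ.mulVec (x - p m))))) +
          (Real.exp (-(Real.sqrt ((x - p m) ⬝ᵥ (D m * (D m)ᵀ).mulVec (x - p m)))) + K)⁻¹ •
            (Real.exp (-(Real.sqrt ((x - p m) ⬝ᵥ (D m * (D m)ᵀ).mulVec (x - p m)))) •
              -((1 / (2 * Real.sqrt ((x - p m) ⬝ᵥ (D m * (D m)ᵀ).mulVec (x - p m)))) •
                dotCLM (-((D m * (D m)ᵀ).mulVec (x - p m)) - (D m * (D m)ᵀ)ᵀ.mulVec (x - p m)))))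
        (p m) := hE.mul hinv
    refine ⟨h'.differentiableAt, fun w => ?_⟩
    rw [h'.fderiv]
    simp only [ContinuousLinearMap.add_apply, ContinuousLinearMap.smul_apply,
      ContinuousLinearMap.neg_apply, dotCLM_apply, smul_eq_mul]
    have e1 : (-((D m * (D m)ᵀ).mulVec (x - p m)) - ((D m * (D m)ᵀ)ᵀ).mulVec (x - p m)) ⬝ᵥ w
        = -2 * ((D m * (D m)ᵀ).mulVec (x - p m) ⬝ᵥ w) := by
      rw [hAt, sub_dotProduct, neg_dotProduct]; ring
    have e2 : ((Real.sqrt ((x - p m) ⬝ᵥ (D m * (D m)ᵀ).mulVec (x - p m)))⁻¹ •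
          (D m * (D m)ᵀ).mulVec (p m - x)) ⬝ᵥ w
        = (Real.sqrt ((x - p m) ⬝ᵥ (D m * (D m)ᵀ).mulVec (x - p m)))⁻¹ *
          (-((D m * (D m)ᵀ).mulVec (x - p m) ⬝ᵥ w)) := by
      rw [show p m - x = -(x - p m) from (neg_sub x (p m)).symm, Matrix.mulVec_neg,
        smul_dotProduct, neg_dotProduct, smul_eq_mul]
    rw [e1, e2]
    have hc0' : Real.sqrt ((x - p m) ⬝ᵥ (D m * (D m)ᵀ).mulVec (x - p m)) ≠ 0 := ne_of_gt hc0
    have hDen' : Real.exp (-(Real.sqrt ((x - p m) ⬝ᵥ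
        (D m * (D m)ᵀ).mulVec (x - p m)))) + K ≠ 0 := ne_of_gt hDen
    revert hc0' hDen'
    generalize (D m * (D m)ᵀ).mulVec (x - p m) ⬝ᵥ w = t
    generalize Real.sqrt ((x - p m) ⬝ᵥ (D m * (D m)ᵀ).mulVec (x - p m)) = s
    generalize K = c
    intro h1 h2
    field_simp
    ring
  · -- m ≠ n
    have hfun : (fun q => Real.exp (-(Real.sqrt ((x - Function.update p n q m) ⬝ᵥ
          (D m * (D m)ᵀ).mulVec (x - Function.update p n q m)))) /
        (ε + ∑ k, Real.exp (-(Real.sqrt ((x - Function.update p n q k) ⬝ᵥ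
          (D k * (D k)ᵀ).mulVec (x - Function.update p n q k))))))
        = fun q => Real.exp (-(Real.sqrt ((x - p m) ⬝ᵥ (D m * (D m)ᵀ).mulVec (x - p m)))) *
          (Real.exp (-(Real.sqrt ((x - q) ⬝ᵥ (D n * (D n)ᵀ).mulVec (x - q)))) + K)⁻¹ := by
      funext q
      rw [hden q, Function.update_of_ne hmn, div_eq_mul_inv]
    rw [hfun, hden0, if_neg hmn]
    have h' : HasFDerivAt
        (fun q => Real.exp (-(Real.sqrt ((x - p m) ⬝ᵥ (D m * (D m)ᵀ).mulVec (x - p m)))) *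
          (Real.exp (-(Real.sqrt ((x - q) ⬝ᵥ (D n * (D n)ᵀ).mulVec (x - q)))) + K)⁻¹)
        (Real.exp (-(Real.sqrt ((x - p m) ⬝ᵥ (D m * (D m)ᵀ).mulVec (x - p m)))) •
          (-((Real.exp (-(Real.sqrt ((x - p n) ⬝ᵥ (D n * (D n)ᵀ).mulVec (x - p n)))) + K) ^ 2)⁻¹ •
            (Real.exp (-(Real.sqrt ((x - p n) ⬝ᵥ (D n * (D n)ᵀ).mulVec (x - p n)))) •
              -((1 / (2 * Real.sqrt ((x - p n) ⬝ᵥ (D n * (D n)ᵀ).mulVec (x - p n)))) •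
                dotCLM (-((D n * (D n)ᵀ).mulVec (x - p n)) - (D n * (D n)ᵀ)ᵀ.mulVec (x - p n))))))
        (p n) := hinv.const_mul _
    refine ⟨h'.differentiableAt, fun w => ?_⟩
    rw [h'.fderiv]
    simp only [ContinuousLinearMap.smul_apply, ContinuousLinearMap.neg_apply, dotCLM_apply,
      smul_eq_mul]
    have e1 : (-((D n * (D n)ᵀ).mulVec (x - p n)) - ((D n * (D n)ᵀ)ᵀ).mulVec (x - p n)) ⬝ᵥ w
        = -2 * ((D n * (D n)ᵀ).mulVec (x - p n) ⬝ᵥ w) := by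
      rw [hAt, sub_dotProduct, neg_dotProduct]; ring
    have e2 : ((Real.sqrt ((x - p n) ⬝ᵥ (D n * (D n)ᵀ).mulVec (x - p n)))⁻¹ •
          (D n * (D n)ᵀ).mulVec (p n - x)) ⬝ᵥ w
        = (Real.sqrt ((x - p n) ⬝ᵥ (D n * (D n)ᵀ).mulVec (x - p n)))⁻¹ *
          (-((D n * (D n)ᵀ).mulVec (x - p n) ⬝ᵥ w)) := by
      rw [show p n - x = -(x - p n) from (neg_sub x (p n)).symm, Matrix.mulVec_neg,
        smul_dotProduct, neg_dotProduct, smul_eq_mul]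
    rw [e1, e2]
    have hc0' : Real.sqrt ((x - p n) ⬝ᵥ (D n * (D n)ᵀ).mulVec (x - p n)) ≠ 0 := ne_of_gt hc0
    have hDen' : Real.exp (-(Real.sqrt ((x - p n) ⬝ᵥ
        (D n * (D n)ᵀ).mulVec (x - p n)))) + K ≠ 0 := ne_of_gt hDen
    revert hc0' hDen'
    generalize (D n * (D n)ᵀ).mulVec (x - p n) ⬝ᵥ w = t
    generalize Real.sqrt ((x - p n) ⬝ᵥ (D n * (D n)ᵀ).mulVec (x - p n)) = s
    generalize K = c
    intro h1 h2
    field_simp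
    ring
end

section
/- Fix n ∈ {1,…,N}. Regard S_0(x) as a function of the n-th site point x_n (all other sites, all matrices D_k, the evaluation point x, and ε_s ≥ 0 being fixed). If x ≠ x_n, then this function is differentiable at x_n and its gradient equals S_0(x)·S_n(x)·Y_n(x), where Y_n(x) = A_n(x_n − x)/d_n(x, x_n). -/
open Matrix

noncomputable def qform {d : ℕ} (A : Matrix (Fin d) (Fin d) ℝ) :
    (Fin d → ℝ) →L[ℝ] (Fin d → ℝ) →L[ℝ] ℝ :=
  LinearMap.toContinuousLinearMap <|
    (LinearMap.toContinuousLinearMap :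
        ((Fin d → ℝ) →ₗ[ℝ] ℝ) ≃ₗ[ℝ] ((Fin d → ℝ) →L[ℝ] ℝ)).toLinearMap.comp <|
      LinearMap.mk₂ ℝ (fun u v => u ⬝ᵥ A.mulVec v)
        (fun u u' v => by simp [add_dotProduct])
        (fun c u v => by simp [smul_dotProduct])
        (fun u v v' => by simp [mulVec_add, dotProduct_add])
        (fun c u v => by simp [mulVec_smul, dotProduct_smul])

@[simp] theorem qform_apply {d : ℕ} (A : Matrix (Fin d) (Fin d) ℝ) (u v : Fin d → ℝ) :
    qform A u v = u ⬝ᵥ A.mulVec v := by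
  simp [qform]

/-- Regarding `S_0(x)` as a function of the `n`-th site point `x_n` (all other data fixed),
if `x ≠ x_n` then it is differentiable at `x_n` with gradient
`S_0(x)·S_n(x)·Y_n(x)` where `Y_n(x) = A_n(x_n − x)/d_n(x, x_n)`
(the gradient being expressed through the Fréchet derivative `w ↦ ⟨grad, w⟩`). -/
theorem S0_differentiableAt_site {d N : ℕ} (p : Fin N → Fin d → ℝ)
    (D : Fin N → Matrix (Fin d) (Fin d) ℝ) (hD : ∀ k, IsUnit (D k))
    (ε : ℝ) (hε : 0 ≤ ε) (x : Fin d → ℝ) (n : Fin N) (hx : x ≠ p n) :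
    DifferentiableAt ℝ (fun q => S0 (Function.update p n q) D ε x) (p n) ∧
      ∀ w : Fin d → ℝ,
        fderiv ℝ (fun q => S0 (Function.update p n q) D ε x) (p n) w =
          S0 p D ε x * S p D ε x n *
            (((mdist (D n * (D n)ᵀ) (x - p n))⁻¹ •
              (D n * (D n)ᵀ).mulVec (p n - x)) ⬝ᵥ w) := by
  classical
  set A : Matrix (Fin d) (Fin d) ℝ := D n * (D n)ᵀ with hA
  set u : Fin d → ℝ := x - p n with hu
  have hune : u ≠ 0 := sub_ne_zero.mpr hx
  have hAsymm : Aᵀ = A := by rw [hA, transpose_mul, transpose_transpose]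
  -- positivity of the quadratic form
  have hDTunit : IsUnit (D n)ᵀ := by
    rw [Matrix.isUnit_iff_isUnit_det, det_transpose, ← Matrix.isUnit_iff_isUnit_det]
    exact hD n
  have hvne : (D n)ᵀ.mulVec u ≠ 0 := by
    intro h
    apply hune
    have hinj := Matrix.mulVec_injective_iff_isUnit.mpr hDTunit
    have : (D n)ᵀ.mulVec u = (D n)ᵀ.mulVec 0 := by rw [h, Matrix.mulVec_zero]
    exact hinj this
  have hquad : u ⬝ᵥ A.mulVec u = ((D n)ᵀ.mulVec u) ⬝ᵥ ((D n)ᵀ.mulVec u) := by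
    rw [hA, ← Matrix.mulVec_mulVec, Matrix.dotProduct_mulVec, Matrix.mulVec_transpose]
  have hqpos : 0 < u ⬝ᵥ A.mulVec u := by
    rw [hquad]
    have h0 : 0 ≤ ((D n)ᵀ.mulVec u) ⬝ᵥ ((D n)ᵀ.mulVec u) :=
      Finset.sum_nonneg fun i _ => mul_self_nonneg _
    rcases h0.lt_or_eq with h | h
    · exact h
    · exact absurd (dotProduct_self_eq_zero.mp h.symm) hvne
  set t₀ : ℝ := u ⬝ᵥ A.mulVec u with ht₀
  have hrpos : 0 < Real.sqrt t₀ := Real.sqrt_pos.mpr hqpos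
  -- derivative of q ↦ (x - q) ⬝ᵥ A (x - q)
  have hid : HasFDerivAt (fun q : Fin d → ℝ => x - q)
      (-(ContinuousLinearMap.id ℝ (Fin d → ℝ))) (p n) :=
    (hasFDerivAt_id (p n)).const_sub x
  set LQ : (Fin d → ℝ) →L[ℝ] ℝ :=
    (qform A).precompR (Fin d → ℝ) u (-(ContinuousLinearMap.id ℝ (Fin d → ℝ))) +
      (qform A).precompL (Fin d → ℝ) (-(ContinuousLinearMap.id ℝ (Fin d → ℝ))) u with hLQ
  have hQ : HasFDerivAt (fun q => (x - q) ⬝ᵥ A.mulVec (x - q)) LQ (p n) := by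
    have := (qform A).hasFDerivAt_of_bilinear hid hid
    simpa only [qform_apply] using this
  have hLQ_app : ∀ w, LQ w = -(2 * (u ⬝ᵥ A.mulVec w)) := by
    intro w
    have hsw : w ⬝ᵥ A.mulVec u = u ⬝ᵥ A.mulVec w := by
      rw [Matrix.dotProduct_mulVec, ← Matrix.mulVec_transpose, hAsymm, dotProduct_comm]
    simp only [hLQ, ContinuousLinearMap.add_apply, ContinuousLinearMap.precompR_apply,
      ContinuousLinearMap.precompL_apply, ContinuousLinearMap.compL_apply,
      ContinuousLinearMap.comp_apply, ContinuousLinearMap.coe_comp', Function.comp_apply,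
      ContinuousLinearMap.neg_apply,
      ContinuousLinearMap.id_apply, qform_apply, Matrix.mulVec_neg, dotProduct_neg,
      neg_dotProduct, hsw, ← hu]
    ring
  -- scalar chain
  set c : ℝ := Real.exp (-Real.sqrt t₀) * -(1 / (2 * Real.sqrt t₀)) with hc
  have hexp : HasDerivAt (fun t : ℝ => Real.exp (-Real.sqrt t)) c t₀ :=
    ((Real.hasDerivAt_sqrt hqpos.ne').neg).exp
  have hE : HasFDerivAt (fun q => Real.exp (-Real.sqrt ((x - q) ⬝ᵥ A.mulVec (x - q))))
      (c • LQ) (p n) := hexp.comp_hasFDerivAt_of_eq (p n) hQ rfl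
  -- the sum over sites
  set f' : Fin N → (Fin d → ℝ) →L[ℝ] ℝ := fun k => if k = n then c • LQ else 0 with hf'
  have hsum : ∀ k ∈ Finset.univ, HasFDerivAt
      (fun q => Real.exp (-(mdist (D k * (D k)ᵀ) (x - Function.update p n q k))))
      (f' k) (p n) := by
    intro k _
    by_cases hk : k = n
    · subst hk
      simp only [hf', if_pos rfl]
      have heq : (fun q => Real.exp (-(mdist (D k * (D k)ᵀ) (x - Function.update p k q k)))) =
          fun q => Real.exp (-Real.sqrt ((x - q) ⬝ᵥ A.mulVec (x - q))) := by
        funext q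
        simp only [Function.update_self, mdist, hA]
      rw [heq]
      exact hE
    · simp only [hf', if_neg hk]
      have : (fun q : Fin d → ℝ =>
            Real.exp (-(mdist (D k * (D k)ᵀ) (x - Function.update p n q k)))) =
          fun _ => Real.exp (-(mdist (D k * (D k)ᵀ) (x - p k))) := by
        funext q
        rw [Function.update_of_ne hk]
      rw [this]
      exact hasFDerivAt_const _ _
  have hsum' : ∑ k, f' k = c • LQ := by
    rw [hf']
    rw [Finset.sum_ite_eq' Finset.univ n (fun _ => c • LQ)]
    simp
  have hG : HasFDerivAt (fun q => Sden (Function.update p n q) D ε x) (c • LQ) (p n) := by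
    have h1 := (hasFDerivAt_const ε (p n)).add (HasFDerivAt.fun_sum hsum)
    rw [zero_add, hsum'] at h1
    exact h1
  -- positivity of the denominator
  set G₀ : ℝ := Sden p D ε x with hG₀def
  have hG₀pos : 0 < G₀ := by
    rw [hG₀def, Sden]
    have : 0 < ∑ k, Real.exp (-(mdist (D k * (D k)ᵀ) (x - p k))) :=
      Finset.sum_pos (fun k _ => Real.exp_pos _) ⟨n, Finset.mem_univ n⟩
    linarith
  have hGpt : Sden (Function.update p n (p n)) D ε x = G₀ := by
    rw [Function.update_eq_self]
  -- quotient
  have hinv : HasDerivAt (fun t : ℝ => ε / t) (ε * -(G₀ ^ 2)⁻¹) G₀ := by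
    have := (hasDerivAt_inv hG₀pos.ne').const_mul ε
    simpa [div_eq_mul_inv] using this
  have hfinal : HasFDerivAt (fun q => S0 (Function.update p n q) D ε x)
      ((ε * -(G₀ ^ 2)⁻¹) • (c • LQ)) (p n) := by
    have := hinv.comp_hasFDerivAt_of_eq (p n) hG hGpt.symm
    exact this
  refine ⟨hfinal.differentiableAt, fun w => ?_⟩
  rw [hfinal.fderiv]
  -- now the algebra
  have hmd : mdist A u = Real.sqrt t₀ := rfl
  have hdot : (A.mulVec (p n - x)) ⬝ᵥ w = -(u ⬝ᵥ A.mulVec w) := by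
    have h1 : p n - x = -u := by rw [hu]; abel
    rw [h1, Matrix.mulVec_neg, neg_dotProduct]
    congr 1
    rw [Matrix.dotProduct_mulVec, ← Matrix.mulVec_transpose, hAsymm]
  simp only [ContinuousLinearMap.smul_apply, smul_eq_mul, hLQ_app w, S0, S, ← hG₀def,
    ← hu, ← hA, hmd, smul_dotProduct, hdot, hc]
  rw [Real.exp_neg]
  field_simp
end

section
/- Fix n, m ∈ {1,…,N}. Regard S_m(x) as a function of the n-th metric matrix D_n (all sites, all other matrices, the evaluation point x, and ε_s ≥ 0 being fixed). If D_nᵀ(x − x_n) ≠ 0 (so d_n(x, x_n) > 0), then this function is differentiable at D_n and its Fréchet derivative in the matrix direction H equals S_m(x)·(S_n(x) − δ_{mn})·(vᵀ H D_nᵀ v)/d_n(x, x_n) with v = x − x_n; equivalently, the gradient matrix is S_m(x)·(S_n(x) − δ_{mn})·d_n(x, x_n)·(X_n ⊗ X_n) D_n with X_n = (x_n − x)/d_n(x, x_n). -/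
open Matrix

/-- The linear map `M ↦ Mᵀ v` as a continuous linear map. -/
noncomputable def qmap {d : ℕ} (v : Fin d → ℝ) : (Fin d → Fin d → ℝ) →L[ℝ] (Fin d → ℝ) :=
  LinearMap.toContinuousLinearMap
    { toFun := fun M => (Matrix.of M)ᵀ.mulVec v
      map_add' := fun M M' => by
        show ((Matrix.of M + Matrix.of M')ᵀ).mulVec v = _
        rw [Matrix.transpose_add, Matrix.add_mulVec]
      map_smul' := fun r M => by
        show ((r • Matrix.of M)ᵀ).mulVec v = _
        rw [Matrix.transpose_smul, Matrix.smul_mulVec]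
        rfl }

lemma qmap_apply {d : ℕ} (v : Fin d → ℝ) (M : Fin d → Fin d → ℝ) :
    qmap v M = (Matrix.of M)ᵀ.mulVec v := rfl

lemma dot_eq_q {d : ℕ} (v : Fin d → ℝ) (M : Fin d → Fin d → ℝ) :
    v ⬝ᵥ (Matrix.of M * (Matrix.of M)ᵀ).mulVec v = qmap v M ⬝ᵥ qmap v M := by
  rw [← Matrix.mulVec_mulVec, Matrix.dotProduct_mulVec, ← Matrix.mulVec_transpose]
  rfl

set_option maxHeartbeats 1000000 in
/-- Regarding `S_m(x)` as a function of the `n`-th metric matrix `D_n` (all other data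
fixed; matrices encoded as `Fin d → Fin d → ℝ`, carrying the Frobenius pairing in the
direction `H`), if `D_nᵀ(x − x_n) ≠ 0` then it is differentiable at `D_n` and its
Fréchet derivative in the direction `H` equals
`S_m(x)·(S_n(x) − δ_{mn})·(vᵀ H D_nᵀ v)/d_n(x, x_n)` with `v = x − x_n`;
equivalently the gradient matrix is
`S_m(x)·(S_n(x) − δ_{mn})·d_n(x, x_n)·(X_n ⊗ X_n) D_n`, `X_n = (x_n − x)/d_n(x, x_n)`. -/
theorem S_differentiableAt_metric {d N : ℕ} (p : Fin N → Fin d → ℝ)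
    (D : Fin N → Matrix (Fin d) (Fin d) ℝ)
    (ε : ℝ) (hε : 0 ≤ ε) (x : Fin d → ℝ) (m n : Fin N)
    (h : (D n)ᵀ.mulVec (x - p n) ≠ 0) :
    DifferentiableAt ℝ
        (fun M : Fin d → Fin d → ℝ =>
          S p (Function.update D n (Matrix.of M)) ε x m) (D n) ∧
      ∀ H : Fin d → Fin d → ℝ,
        fderiv ℝ (fun M : Fin d → Fin d → ℝ =>
            S p (Function.update D n (Matrix.of M)) ε x m) (D n) H =
          S p D ε x m * (S p D ε x n - if m = n then 1 else 0) *
            ((x - p n) ⬝ᵥ (Matrix.of H * (D n)ᵀ).mulVec (x - p n)) /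
              mdist (D n * (D n)ᵀ) (x - p n) := by
  classical
  set v : Fin d → ℝ := x - p n with hv
  -- the squared distance function and its value at `D n`
  have hqA : qmap v (D n) = (D n)ᵀ.mulVec v := rfl
  have hfA0 : qmap v (D n) ⬝ᵥ qmap v (D n) ≠ 0 := by
    intro hz
    exact h (hqA ▸ dotProduct_self_eq_zero.mp hz)
  have hfApos : 0 < qmap v (D n) ⬝ᵥ qmap v (D n) := by
    have : 0 ≤ qmap v (D n) ⬝ᵥ qmap v (D n) :=
      Finset.sum_nonneg fun i _ => mul_self_nonneg _
    exact lt_of_le_of_ne this (Ne.symm hfA0)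
  set t0 : ℝ := mdist (D n * (D n)ᵀ) v with ht0
  have ht0sqrt : t0 = Real.sqrt (qmap v (D n) ⬝ᵥ qmap v (D n)) :=
    congrArg Real.sqrt (dot_eq_q v (D n))
  have ht0pos : 0 < t0 := by rw [ht0sqrt]; exact Real.sqrt_pos.2 hfApos
  -- derivative of M ↦ q M ⬝ᵥ q M
  set L1 : (Fin d → Fin d → ℝ) →L[ℝ] ℝ :=
    ∑ i, (qmap v (D n) i • ((ContinuousLinearMap.proj i).comp (qmap v))
        + qmap v (D n) i • ((ContinuousLinearMap.proj i).comp (qmap v))) with hL1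
  have hfD : HasFDerivAt (fun M : Fin d → Fin d → ℝ => qmap v M ⬝ᵥ qmap v M) L1 (D n) := by
    have : HasFDerivAt (fun M : Fin d → Fin d → ℝ => ∑ i, qmap v M i * qmap v M i) L1 (D n) := by
      rw [hL1]
      apply HasFDerivAt.fun_sum
      intro i _
      exact (((ContinuousLinearMap.proj i).comp (qmap v)).hasFDerivAt).mul
        (((ContinuousLinearMap.proj i).comp (qmap v)).hasFDerivAt)
    exact this
  -- derivative of g : M ↦ mdist (M Mᵀ) v
  set g : (Fin d → Fin d → ℝ) → ℝ :=
    fun M => mdist (Matrix.of M * (Matrix.of M)ᵀ) v with hg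
  have hgeq : g = fun M => Real.sqrt (qmap v M ⬝ᵥ qmap v M) := by
    funext M; exact congrArg Real.sqrt (dot_eq_q v M)
  have hgA : g (D n) = t0 := rfl
  have hgD : HasFDerivAt g ((1 / (2 * t0)) • L1) (D n) := by
    rw [hgeq, ht0sqrt]
    exact hfD.sqrt hfA0
  -- the scalar pieces
  set a : ℝ := Real.exp (-(mdist (D m * (D m)ᵀ) (x - p m))) with ha
  set c : ℝ := ε + ∑ k ∈ Finset.univ.erase n, Real.exp (-(mdist (D k * (D k)ᵀ) (x - p k))) with hc
  have hEpos : 0 < Real.exp (-t0) := Real.exp_pos _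
  have hcnonneg : 0 ≤ c :=
    add_nonneg hε (Finset.sum_nonneg fun k _ => (Real.exp_pos _).le)
  have hden : 0 < c + Real.exp (-t0) := by linarith
  -- the denominator as a function of M
  have hSden : ∀ M : Fin d → Fin d → ℝ,
      Sden p (Function.update D n (Matrix.of M)) ε x = c + Real.exp (-(g M)) := by
    intro M
    unfold Sden
    rw [← Finset.add_sum_erase Finset.univ _ (Finset.mem_univ n)]
    have h1 : ∀ k ∈ Finset.univ.erase n,
        Real.exp (-(mdist (Function.update D n (Matrix.of M) k *
            (Function.update D n (Matrix.of M) k)ᵀ) (x - p k)))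
          = Real.exp (-(mdist (D k * (D k)ᵀ) (x - p k))) := by
      intro k hk
      rw [Function.update_of_ne (Finset.ne_of_mem_erase hk)]
    rw [Finset.sum_congr rfl h1, Function.update_self, hc]
    have h2 : mdist (Matrix.of M * (Matrix.of M)ᵀ) (x - p n) = g M := by rw [hg, ← hv]
    rw [h2]; ring
  have hupd : Function.update D n (Matrix.of (D n)) = D := Function.update_eq_self n D
  have hSdenD : Sden p D ε x = c + Real.exp (-t0) := by
    have := hSden (D n)
    rw [hupd] at this
    rw [this, hgA]
  -- S as a function of M
  have hfun : ∀ M : Fin d → Fin d → ℝ,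
      S p (Function.update D n (Matrix.of M)) ε x m
        = (if m = n then Real.exp (-(g M)) else a) / (c + Real.exp (-(g M))) := by
    intro M
    unfold S
    rw [hSden M]
    have hnumeq : Real.exp (-(mdist (Function.update D n (Matrix.of M) m *
        (Function.update D n (Matrix.of M) m)ᵀ) (x - p m)))
          = (if m = n then Real.exp (-(g M)) else a) := by
      by_cases hmn : m = n
      · subst hmn
        rw [if_pos rfl, Function.update_self]
      · rw [if_neg hmn, Function.update_of_ne hmn, ha]
    rw [hnumeq]
  -- the one-dimensional outer function and its derivative
  set F : ℝ → ℝ := fun t => (if m = n then Real.exp (-t) else a) / (c + Real.exp (-t)) with hF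
  have hnum : HasDerivAt (fun t => if m = n then Real.exp (-t) else a)
      (if m = n then -Real.exp (-t0) else 0) t0 := by
    by_cases hmn : m = n
    · simp only [if_pos hmn]
      simpa using (hasDerivAt_neg t0).exp
    · simp only [if_neg hmn]
      exact hasDerivAt_const t0 a
  have hd2 : HasDerivAt (fun t => c + Real.exp (-t)) (-Real.exp (-t0)) t0 := by
    simpa using (hasDerivAt_neg t0).exp.const_add c
  have hFd : HasDerivAt F
      (((if m = n then -Real.exp (-t0) else 0) * (c + Real.exp (-t0)) -
        (if m = n then Real.exp (-t0) else a) * (-Real.exp (-t0))) /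
          (c + Real.exp (-t0)) ^ 2) t0 := by
    rw [hF]
    exact hnum.div hd2 (ne_of_gt hden)
  -- composition
  have hcomp : HasFDerivAt (fun M : Fin d → Fin d → ℝ =>
      S p (Function.update D n (Matrix.of M)) ε x m)
      ((((if m = n then -Real.exp (-t0) else 0) * (c + Real.exp (-t0)) -
        (if m = n then Real.exp (-t0) else a) * (-Real.exp (-t0))) /
          (c + Real.exp (-t0)) ^ 2) • ((1 / (2 * t0)) • L1))
      (show Fin d → Fin d → ℝ from D n) := by
    have h0 := hFd.comp_hasFDerivAt (show Fin d → Fin d → ℝ from D n) hgD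
    exact h0.congr_of_eventuallyEq (Filter.Eventually.of_forall fun M => hfun M)
  refine ⟨hcomp.differentiableAt, fun H => ?_⟩
  rw [hcomp.fderiv]
  -- evaluate the derivative at H
  have hL1H : L1 H = 2 * (qmap v (D n) ⬝ᵥ qmap v H) := by
    rw [hL1]
    simp only [ContinuousLinearMap.sum_apply, ContinuousLinearMap.add_apply,
      ContinuousLinearMap.coe_smul', Pi.smul_apply, ContinuousLinearMap.coe_comp',
      Function.comp_apply, ContinuousLinearMap.proj_apply, smul_eq_mul]
    rw [dotProduct, two_mul, ← Finset.sum_add_distrib]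
  have hvH : v ⬝ᵥ (Matrix.of H * (D n)ᵀ).mulVec v = qmap v (D n) ⬝ᵥ qmap v H := by
    rw [← Matrix.mulVec_mulVec, Matrix.dotProduct_mulVec, ← Matrix.mulVec_transpose]
    exact dotProduct_comm _ _
  have hSm : S p D ε x m = a / (c + Real.exp (-t0)) := by
    unfold S; rw [hSdenD, ha]
  have hSn : S p D ε x n = Real.exp (-t0) / (c + Real.exp (-t0)) := by
    unfold S; rw [hSdenD, ← hv, ← ht0]
  have haE : m = n → a = Real.exp (-t0) := by
    intro hmn; rw [ha, hmn, ← hv, ← ht0]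
  rw [ContinuousLinearMap.smul_apply, ContinuousLinearMap.smul_apply, hL1H, hvH, hSm, hSn]
  have hne1 : c + Real.exp (-t0) ≠ 0 := ne_of_gt hden
  have hne2 : t0 ≠ 0 := ne_of_gt ht0pos
  set s : ℝ := qmap v (D n) ⬝ᵥ qmap v H with hs
  clear_value s
  clear_value t0 c a
  by_cases hmn : m = n
  · rw [haE hmn]
    simp only [if_pos hmn, smul_eq_mul]
    field_simp
    ring
  · simp only [if_neg hmn, smul_eq_mul]
    field_simp
    ring
end

section
/- Fix n ∈ {1,…,N}. Regard S_0(x) as a function of the n-th metric matrix D_n (all sites, all other matrices, the evaluation point x, and ε_s ≥ 0 being fixed). If D_nᵀ(x − x_n) ≠ 0, then this function is differentiable at D_n and its Fréchet derivative in the matrix direction H equals S_0(x)·S_n(x)·(vᵀ H D_nᵀ v)/d_n(x, x_n) with v = x − x_n; equivalently, the gradient matrix is S_0(x)·S_n(x)·d_n(x, x_n)·(X_n ⊗ X_n) D_n with X_n = (x_n − x)/d_n(x, x_n). -/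
open Matrix

/-- Regarding `S_0(x)` as a function of the `n`-th metric matrix `D_n` (all other data
fixed; matrices encoded as `Fin d → Fin d → ℝ`, carrying the Frobenius pairing in the
direction `H`), if `D_nᵀ(x − x_n) ≠ 0` then it is differentiable at `D_n` and its
Fréchet derivative in the direction `H` equals
`S_0(x)·S_n(x)·(vᵀ H D_nᵀ v)/d_n(x, x_n)` with `v = x − x_n`; equivalently the
gradient matrix is `S_0(x)·S_n(x)·d_n(x, x_n)·(X_n ⊗ X_n) D_n`. -/
theorem S0_differentiableAt_metric {d N : ℕ} (p : Fin N → Fin d → ℝ)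
    (D : Fin N → Matrix (Fin d) (Fin d) ℝ)
    (ε : ℝ) (hε : 0 ≤ ε) (x : Fin d → ℝ) (n : Fin N)
    (h : (D n)ᵀ.mulVec (x - p n) ≠ 0) :
    DifferentiableAt ℝ
        (fun M : Fin d → Fin d → ℝ =>
          S0 p (Function.update D n (Matrix.of M)) ε x) (D n) ∧
      ∀ H : Fin d → Fin d → ℝ,
        fderiv ℝ (fun M : Fin d → Fin d → ℝ =>
            S0 p (Function.update D n (Matrix.of M)) ε x) (D n) H =
          S0 p D ε x * S p D ε x n *
            ((x - p n) ⬝ᵥ (Matrix.of H * (D n)ᵀ).mulVec (x - p n)) /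
              mdist (D n * (D n)ᵀ) (x - p n) := by
  classical
  set v : Fin d → ℝ := x - p n with hv
  -- expansion lemmas
  have key : ∀ (B : Matrix (Fin d) (Fin d) ℝ),
      v ⬝ᵥ (B * Bᵀ).mulVec v = ∑ i, (∑ j, B j i * v j) * (∑ j, B j i * v j) := by
    intro B
    rw [← Matrix.mulVec_mulVec, Matrix.dotProduct_mulVec, ← Matrix.mulVec_transpose]
    simp [dotProduct, mulVec]
  have key2 : ∀ (Hm : Matrix (Fin d) (Fin d) ℝ),
      v ⬝ᵥ (Hm * (D n)ᵀ).mulVec v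
        = ∑ i, (∑ j, D n j i * v j) * (∑ j, v j * Hm j i) := by
    intro Hm
    rw [← Matrix.mulVec_mulVec, Matrix.dotProduct_mulVec]
    simp [dotProduct, mulVec, vecMul, mul_comm]
  -- g and positivity
  set g : (Fin d → Fin d → ℝ) → ℝ :=
    fun M => ∑ i, (∑ j, M j i * v j) * (∑ j, M j i * v j) with hg
  have hgpos : 0 < g (D n) := by
    obtain ⟨i, hi⟩ : ∃ i, (D n)ᵀ.mulVec v i ≠ 0 := Function.ne_iff.mp h
    have hi' : (∑ j, D n j i * v j) ≠ 0 := by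
      simpa [mulVec, dotProduct, Matrix.transpose_apply] using hi
    exact Finset.sum_pos' (fun i _ => mul_self_nonneg _)
      ⟨i, Finset.mem_univ i, mul_self_pos.mpr hi'⟩
  have hgne : g (D n) ≠ 0 := ne_of_gt hgpos
  have hrpos : 0 < Real.sqrt (g (D n)) := Real.sqrt_pos.mpr hgpos
  -- derivative of g
  set P : Fin d → Fin d → ((Fin d → Fin d → ℝ) →L[ℝ] ℝ) := fun j i =>
    (ContinuousLinearMap.proj i).comp
      (ContinuousLinearMap.proj (R := ℝ) (φ := fun _ : Fin d => Fin d → ℝ) j) with hP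
  have hw : ∀ i, HasFDerivAt (fun M : Fin d → Fin d → ℝ => ∑ j, M j i * v j)
      (∑ j, (v j) • P j i) (D n) := by
    intro i
    exact HasFDerivAt.fun_sum fun j _ => (P j i).hasFDerivAt.mul_const (v j)
  set Li : Fin d → ((Fin d → Fin d → ℝ) →L[ℝ] ℝ) := fun i => ∑ j, (v j) • P j i with hLi
  set u : Fin d → ℝ := fun i => ∑ j, D n j i * v j with hu
  set Lg : (Fin d → Fin d → ℝ) →L[ℝ] ℝ := ∑ i, (u i • Li i + u i • Li i) with hLg
  have hgd : HasFDerivAt g Lg (D n) :=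
    HasFDerivAt.fun_sum fun i _ => (hw i).mul (hw i)
  -- sqrt
  have hrd : HasFDerivAt (fun M => Real.sqrt (g M))
      ((1 / (2 * Real.sqrt (g (D n)))) • Lg) (D n) := hgd.sqrt hgne
  -- denominator as function of M
  set C : ℝ := ε + ∑ k ∈ Finset.univ.erase n,
      Real.exp (-(mdist (D k * (D k)ᵀ) (x - p k))) with hC
  have hdeneq : ∀ M : Fin d → Fin d → ℝ,
      Sden p (Function.update D n (Matrix.of M)) ε x
        = C + Real.exp (-(Real.sqrt (g M))) := by
    intro M
    rw [Sden, ← Finset.add_sum_erase _ _ (Finset.mem_univ n)]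
    have h2 : ∀ k ∈ Finset.univ.erase n,
        Real.exp (-(mdist (Function.update D n (Matrix.of M) k *
            (Function.update D n (Matrix.of M) k)ᵀ) (x - p k)))
          = Real.exp (-(mdist (D k * (D k)ᵀ) (x - p k))) := by
      intro k hk
      rw [Function.update_of_ne (Finset.ne_of_mem_erase hk)]
    rw [Finset.sum_congr rfl h2, hC]
    have h1 : Function.update D n (Matrix.of M) n = Matrix.of M :=
      Function.update_self _ _ _
    rw [h1]
    have h3 : mdist (Matrix.of M * (Matrix.of M)ᵀ) (x - p n) = Real.sqrt (g M) := by
      rw [mdist, ← hv, key]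
      rfl
    rw [h3]
    ring
  have hupd : Function.update D n (Matrix.of (D n)) = D :=
    Function.update_eq_self _ _
  have hSdenval : Sden p D ε x = C + Real.exp (-(Real.sqrt (g (D n)))) := by
    have := hdeneq (D n)
    rwa [hupd] at this
  have hmdist : mdist (D n * (D n)ᵀ) v = Real.sqrt (g (D n)) := by
    rw [mdist, key]
  have hSdenpos : 0 < Sden p D ε x := by
    rw [Sden]
    have : 0 < ∑ k, Real.exp (-(mdist (D k * (D k)ᵀ) (x - p k))) :=
      Finset.sum_pos (fun k _ => Real.exp_pos _) ⟨n, Finset.mem_univ n⟩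
    linarith
  have hCne : C + Real.exp (-(Real.sqrt (g (D n)))) ≠ 0 := by
    rw [← hSdenval]; exact ne_of_gt hSdenpos
  -- the denominator function has a derivative
  have hdend : HasFDerivAt (fun M => C + Real.exp (-(Real.sqrt (g M))))
      (Real.exp (-(Real.sqrt (g (D n)))) •
        (-((1 / (2 * Real.sqrt (g (D n)))) • Lg))) (D n) :=
    (hrd.neg.exp).const_add C
  -- inverse composition
  have hF' := HasDerivAt.comp_hasFDerivAt (E := Fin d → Fin d → ℝ) (𝕜 := ℝ) (D n)
      ((hasDerivAt_inv hCne).const_mul ε) hdend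
  have hF : HasFDerivAt
      (fun M => ε * (C + Real.exp (-(Real.sqrt (g M))))⁻¹)
      ((ε * -(((C + Real.exp (-(Real.sqrt (g (D n))))) ^ 2)⁻¹)) •
        (Real.exp (-(Real.sqrt (g (D n)))) •
          (-((1 / (2 * Real.sqrt (g (D n)))) • Lg)))) (D n) := hF'
  have hfun : (fun M : Fin d → Fin d → ℝ =>
      S0 p (Function.update D n (Matrix.of M)) ε x)
        = fun M => ε * (C + Real.exp (-(Real.sqrt (g M))))⁻¹ := by
    funext M; rw [S0, hdeneq, div_eq_mul_inv]
  constructor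
  · rw [hfun]; exact hF.differentiableAt
  · intro H
    rw [hfun, hF.fderiv]
    have hLiH : ∀ i, Li i H = ∑ j, v j * H j i := by
      intro i
      simp [hLi, hP]
    have hLgH : Lg H = 2 * (v ⬝ᵥ (Matrix.of H * (D n)ᵀ).mulVec v) := by
      rw [key2 (Matrix.of H), hLg]
      simp only [ContinuousLinearMap.sum_apply, ContinuousLinearMap.add_apply,
        ContinuousLinearMap.smul_apply, smul_eq_mul, hLiH, Matrix.of_apply]
      rw [Finset.mul_sum]
      exact Finset.sum_congr rfl fun i _ => by rw [hu]; ring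
    simp only [ContinuousLinearMap.smul_apply, ContinuousLinearMap.neg_apply,
      smul_eq_mul]
    rw [hLgH, S0, S, hSdenval, hmdist]
    have hrne : Real.sqrt (g (D n)) ≠ 0 := ne_of_gt hrpos
    have hCne' : C + Real.exp (-(Real.sqrt (g (D n)))) ≠ 0 := hCne
    generalize hT : v ⬝ᵥ (Matrix.of H * (D n)ᵀ).mulVec v = T
    generalize hsq : Real.sqrt (g (D n)) = s at hrne hCne' ⊢
    generalize hEx : Real.exp (-s) = E at hCne' ⊢
    generalize hCC : C + E = K at hCne' ⊢
    clear_value v g Li u Lg P C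
    clear * - hrne hCne'
    field_simp
end
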